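/- Let A ∈ ℂ^{m×n×p}, W ∈ ℂ^{n×m×p}, γ ∈ ℂ, and define the sequence Z₀ = γ·W, Z_{j+1} = Z_j *_M Σ_{k=0}^{18} (I_M − A *_M Z_j)^k. Then for every j ≥ 0, R_M(Z_j) ⊆ R_M(W) and N_M(W) ⊆ N_M(Z_j). -/

import Mathlib

open Matrix Finset

/-- A third-order tensor in `ℂ^{m×n×p}`, given by its `p` frontal slices. -/
abbrev Tensor (m n p : ℕ) := Fin p → Matrix (Fin m) (Fin n) ℂ

/-- The transform `Â = A ×₃ M` (mode-3 product with `M`). -/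
noncomputable def hatT {m n p : ℕ} (M : Matrix (Fin p) (Fin p) ℂ) (A : Tensor m n p) :
    Tensor m n p :=
  fun l => ∑ s, M l s • A s

/-- `mat(A)`: the block-diagonal matrix whose blocks are frontal slices of `A ×₃ M`. -/
noncomputable def matT {m n p : ℕ} (M : Matrix (Fin p) (Fin p) ℂ) (A : Tensor m n p) :
    Matrix (Fin m × Fin p) (Fin n × Fin p) ℂ :=
  Matrix.blockDiagonal (hatT M A)

/-- The M-product `A *_M B`, determined by `mat(A *_M B) = mat(A)·mat(B)`. -/
noncomputable def mprod {m n k p : ℕ} (M : Matrix (Fin p) (Fin p) ℂ)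
    (A : Tensor m n p) (B : Tensor n k p) : Tensor m k p :=
  fun l => ∑ s, M⁻¹ l s • (hatT M A s * hatT M B s)

/-- The conjugate transpose `A^*`, determined by `mat(A^*) = mat(A)^*`. -/
noncomputable def mstar {m n p : ℕ} (M : Matrix (Fin p) (Fin p) ℂ) (A : Tensor m n p) :
    Tensor n m p :=
  fun l => ∑ s, M⁻¹ l s • (hatT M A s)ᴴ

/-- The identity tensor `I_M ∈ ℂ^{m×m×p}`, determined by `mat(I_M) = I`. -/
noncomputable def idT {p : ℕ} (M : Matrix (Fin p) (Fin p) ℂ) (m : ℕ) : Tensor m m p :=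
  fun l => ∑ s, M⁻¹ l s • (1 : Matrix (Fin m) (Fin m) ℂ)

/-- M-product powers of a square tensor. -/
noncomputable def mpow {m p : ℕ} (M : Matrix (Fin p) (Fin p) ℂ) (A : Tensor m m p) :
    ℕ → Tensor m m p
  | 0 => idT M m
  | k + 1 => mprod M A (mpow M A k)

/-- `R_M(A)`: the column space of `mat(A)`. -/
noncomputable def rangeM {m n p : ℕ} (M : Matrix (Fin p) (Fin p) ℂ) (A : Tensor m n p) :
    Submodule ℂ (Fin m × Fin p → ℂ) :=
  LinearMap.range (matT M A).mulVecLin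

/-- `N_M(A)`: the kernel of `mat(A)`. -/
noncomputable def kerM {m n p : ℕ} (M : Matrix (Fin p) (Fin p) ℂ) (A : Tensor m n p) :
    Submodule ℂ (Fin n × Fin p → ℂ) :=
  LinearMap.ker (matT M A).mulVecLin

/-- `rank_M(A) = rank(mat(A))`. -/
noncomputable def rankM {m n p : ℕ} (M : Matrix (Fin p) (Fin p) ℂ) (A : Tensor m n p) : ℕ :=
  (matT M A).rank

/-- The first `s` lateral slices `Q(:,1:s,:)`. -/
def latSlice {n s p : ℕ} (hsn : s ≤ n) (Q : Tensor n n p) : Tensor n s p :=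
  fun l => (Q l).submatrix id (Fin.castLE hsn)

/-- The first `s` horizontal slices `R(1:s,:,:)`. -/
def horSlice {n m s p : ℕ} (hsn : s ≤ n) (R : Tensor n m p) : Tensor s m p :=
  fun l => (R l).submatrix (Fin.castLE hsn) id

/-- Frobenius norm of a complex matrix. -/
noncomputable def frobNorm {α β : Type*} [Fintype α] [Fintype β] (X : Matrix α β ℂ) : ℝ :=
  Real.sqrt (∑ i, ∑ j, ‖X i j‖ ^ 2)
section Aux
variable {m n k p : ℕ}

lemma key_sum (M : Matrix (Fin p) (Fin p) ℂ) (hM : IsUnit M.det)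
    (X : Fin p → Matrix (Fin m) (Fin n) ℂ) (l : Fin p) :
    ∑ s, M l s • (∑ t, M⁻¹ s t • X t) = X l := by
  simp only [Finset.smul_sum, smul_smul]
  rw [Finset.sum_comm]
  have h1 : ∀ t : Fin p, ∑ s, (M l s * M⁻¹ s t) • X t = ((M * M⁻¹) l t) • X t := by
    intro t; rw [← Finset.sum_smul, Matrix.mul_apply]
  simp only [h1, Matrix.mul_nonsing_inv M hM, Matrix.one_apply]
  simp

lemma hatT_mprod (M : Matrix (Fin p) (Fin p) ℂ) (hM : IsUnit M.det)
    (A : Tensor m n p) (B : Tensor n k p) (l : Fin p) :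
    hatT M (mprod M A B) l = hatT M A l * hatT M B l := by
  show ∑ s, M l s • mprod M A B s = _
  exact key_sum M hM (fun t => hatT M A t * hatT M B t) l

lemma matT_mprod (M : Matrix (Fin p) (Fin p) ℂ) (hM : IsUnit M.det)
    (A : Tensor m n p) (B : Tensor n k p) :
    matT M (mprod M A B) = matT M A * matT M B := by
  unfold matT
  rw [← Matrix.blockDiagonal_mul]
  exact congrArg Matrix.blockDiagonal (funext fun l => hatT_mprod M hM A B l)

lemma hatT_idT (M : Matrix (Fin p) (Fin p) ℂ) (hM : IsUnit M.det) (l : Fin p) :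
    hatT M (idT M m) l = 1 := by
  show ∑ s, M l s • idT M m s = _
  exact key_sum M hM (fun _ => (1 : Matrix (Fin m) (Fin m) ℂ)) l

lemma matT_idT (M : Matrix (Fin p) (Fin p) ℂ) (hM : IsUnit M.det) :
    matT M (idT M (m := m)) = 1 := by
  unfold matT
  rw [← Matrix.blockDiagonal_one]
  exact congrArg Matrix.blockDiagonal (funext fun l => hatT_idT M hM l)

lemma hatT_smul (M : Matrix (Fin p) (Fin p) ℂ) (γ : ℂ) (A : Tensor m n p) :
    hatT M (γ • A) = γ • hatT M A := by
  funext l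
  simp [hatT, Finset.smul_sum, smul_comm γ]

lemma matT_smul (M : Matrix (Fin p) (Fin p) ℂ) (γ : ℂ) (A : Tensor m n p) :
    matT M (γ • A) = γ • matT M A := by
  unfold matT
  rw [hatT_smul, Matrix.blockDiagonal_smul]

lemma hatT_sub (M : Matrix (Fin p) (Fin p) ℂ) (A B : Tensor m n p) :
    hatT M (A - B) = hatT M A - hatT M B := by
  funext l
  simp [hatT, smul_sub, Finset.sum_sub_distrib]

lemma matT_sub (M : Matrix (Fin p) (Fin p) ℂ) (A B : Tensor m n p) :
    matT M (A - B) = matT M A - matT M B := by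
  unfold matT
  rw [hatT_sub, Matrix.blockDiagonal_sub]

lemma hatT_sum (M : Matrix (Fin p) (Fin p) ℂ) {ι : Type*} (s : Finset ι)
    (f : ι → Tensor m n p) :
    hatT M (∑ i ∈ s, f i) = ∑ i ∈ s, hatT M (f i) := by
  funext l
  simp [hatT, Finset.smul_sum]
  rw [Finset.sum_comm]

lemma matT_sum (M : Matrix (Fin p) (Fin p) ℂ) {ι : Type*} (s : Finset ι)
    (f : ι → Tensor m n p) :
    matT M (∑ i ∈ s, f i) = ∑ i ∈ s, matT M (f i) := by
  unfold matT
  rw [hatT_sum]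
  exact map_sum (Matrix.blockDiagonalAddMonoidHom _ _ _ _) _ s

lemma sum_mulVec' {a b : ℕ} {ι : Type*} (s : Finset ι)
    (f : ι → Matrix (Fin a × Fin p) (Fin b × Fin p) ℂ) (v : Fin b × Fin p → ℂ) :
    (∑ i ∈ s, f i) *ᵥ v = ∑ i ∈ s, f i *ᵥ v := by
  classical
  induction s using Finset.induction with
  | empty => simp [Matrix.zero_mulVec]
  | insert _ _ h ih => simp [Finset.sum_insert h, Matrix.add_mulVec, ih]

lemma matT_mpow (M : Matrix (Fin p) (Fin p) ℂ) (hM : IsUnit M.det)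
    (A : Tensor m m p) (k : ℕ) :
    matT M (mpow M A k) = (matT M A) ^ k := by
  induction k with
  | zero => simpa [mpow] using matT_idT (m := m) M hM
  | succ k ih => rw [mpow, matT_mprod M hM, ih, pow_succ']

end Aux

/-- The hyperpower iterates starting from `Z₀ = γ·W` keep their range inside `R_M(W)` and
their null space above `N_M(W)`. -/
theorem hpi19_range_null_invariance {m n p : ℕ}
    (M : Matrix (Fin p) (Fin p) ℂ) (hM : IsUnit M.det)
    (A : Tensor m n p) (W : Tensor n m p) (γ : ℂ)
    (Z : ℕ → Tensor n m p)
    (hZ0 : Z 0 = γ • W)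
    (hZ : ∀ j, Z (j + 1) =
      mprod M (Z j) (∑ k ∈ Finset.range 19, mpow M (idT M m - mprod M A (Z j)) k)) :
    ∀ j, rangeM M (Z j) ≤ rangeM M W ∧ kerM M W ≤ kerM M (Z j) := by
  intro j
  induction j with
  | zero =>
    constructor
    · intro v hv
      rcases hv with ⟨u, hu⟩
      refine ⟨γ • u, ?_⟩
      rw [← hu, hZ0, matT_smul]
      simp only [Matrix.mulVecLin_apply, Matrix.smul_mulVec, Matrix.mulVec_smul]
    · intro v hv
      simp only [kerM, LinearMap.mem_ker, Matrix.mulVecLin_apply] at hv ⊢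
      rw [hZ0, matT_smul]
      simp [Matrix.smul_mulVec, hv]
  | succ j ih =>
    obtain ⟨ihr, ihk⟩ := ih
    have hmat : matT M (Z (j + 1)) =
        matT M (Z j) *
          ∑ k ∈ Finset.range 19, (1 - matT M A * matT M (Z j)) ^ k := by
      rw [hZ j, matT_mprod M hM, matT_sum]
      congr 1
      refine Finset.sum_congr rfl fun k _ => ?_
      rw [matT_mpow M hM, matT_sub, matT_idT M hM, matT_mprod M hM]
    constructor
    · intro v hv
      rcases hv with ⟨u, hu⟩
      apply ihr
      rw [← hu]
      refine ⟨(∑ k ∈ Finset.range 19, (1 - matT M A * matT M (Z j)) ^ k).mulVec u, ?_⟩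
      simp only [Matrix.mulVecLin_apply, hmat, Matrix.mulVec_mulVec]
    · intro v hv
      have hZj : (matT M (Z j)).mulVec v = 0 := ihk hv
      simp only [kerM, LinearMap.mem_ker, Matrix.mulVecLin_apply]
      rw [hmat, ← Matrix.mulVec_mulVec]
      have hpow : ∀ k : ℕ, ((1 - matT M A * matT M (Z j)) ^ k).mulVec v = v := by
        intro k
        induction k with
        | zero => simp
        | succ k ihp =>
          have hBv : (1 - matT M A * matT M (Z j)) *ᵥ v = v := by
            rw [Matrix.sub_mulVec, ← Matrix.mulVec_mulVec, hZj]
            simp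
          rw [pow_succ, ← Matrix.mulVec_mulVec, hBv, ihp]
      rw [sum_mulVec']
      simp only [hpow]
      rw [Finset.sum_const, Matrix.mulVec_smul, hZj]
      simp
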